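/- The polynomial P₁(z) = 5z − 1 has exactly one root in (0,1); for d = 7 (m = 1), a formal power series solution u(y) = c + c₁(y−1) + ... of the Yang–Mills ODE at y = 1 with c ∈ (0,1) requires either c ∈ {0, 1} or 5c² = 1. -/

import Mathlib

open PowerSeries

/-- The formal self-similar Yang–Mills ODE at `y = 1`: the unknown `u` is a formal power
series in `t = y - 1`, so `y` corresponds to the series `1 + X`. -/
def FormalYMSolution (d : ℝ) (u : PowerSeries ℝ) : Prop :=
  (1 + X) ^ 2 * (1 - (1 + X) ^ 2) * (PowerSeries.derivative ℝ (PowerSeries.derivative ℝ u))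
    + (C (d - 3) * (1 + X) - C (2 : ℝ) * (1 + X) ^ 3) * PowerSeries.derivative ℝ u
    + C (d - 2) * u * (1 - u ^ 2) = 0

theorem stmt9 :
    (∃! z : ℝ, z ∈ Set.Ioo (0 : ℝ) 1 ∧ 5 * z - 1 = 0) ∧
    (∀ u : PowerSeries ℝ, FormalYMSolution 7 u →
      coeff 0 u ∈ Set.Ioo (0 : ℝ) 1 →
      coeff 0 u = 0 ∨ coeff 0 u = 1 ∨ 5 * (coeff 0 u) ^ 2 = 1) := by
  constructor
  · refine ⟨1/5, ⟨⟨by norm_num, by norm_num⟩, by norm_num⟩, ?_⟩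
    rintro z ⟨-, hz⟩
    linarith
  · intro u h hmem
    unfold FormalYMSolution at h
    have h0 := congrArg (coeff 0) h
    have h1 := congrArg (coeff 1) h
    simp [coeff_mul, Finset.Nat.antidiagonal_succ, coeff_derivative, pow_succ,
      Prod.map, Finset.sum_pair, coeff_X, coeff_C] at h0 h1
    simp only [← coeff_zero_eq_constantCoeff_apply, coeff_derivative] at h0 h1
    push_cast at h0 h1
    set c := coeff 0 u with hc
    set c1 := coeff 1 u
    obtain ⟨hc0, hc1⟩ := hmem
    have hkey : c1 * (3 - 15 * c ^ 2) = 0 := by nlinarith [h1]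
    rcases mul_eq_zero.mp hkey with h' | h'
    · exfalso
      rw [h'] at h0
      nlinarith
    · right; right; linarith
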